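/- arXiv:2205.00477 — 4 statements merged into one kernel-verified Lean document; each statement's English description precedes it below -/
import Mathlib

section
/- Let K be an n×n real symmetric positive semidefinite matrix, γ > 0 a real number such that I − γK is positive semidefinite (equivalently, every eigenvalue d of K satisfies γ·d ≤ 1), and t ≥ 1 a natural number. Then for every vector v ∈ ℝⁿ: vᵀ (I − γK)^t K (I − γK)^t v ≤ ‖v‖² / (2·e·γ·t), where e is Euler's number. -/
open Matrix

private lemma scalar_spectral_bound (γ x : ℝ) (hγ : 0 < γ) (hx : 0 ≤ x)
    (hxγ : γ * x ≤ 1) (t : ℕ) (ht : 1 ≤ t) :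
    x * (1 - γ * x) ^ (2 * t) ≤ 1 / (2 * Real.exp 1 * γ * t) := by
  have ht0 : (0:ℝ) < t := by exact_mod_cast ht
  have h1 : (0:ℝ) ≤ 1 - γ * x := by linarith
  have h2 : 1 - γ * x ≤ Real.exp (-(γ * x)) := by
    linarith [Real.add_one_le_exp (-(γ * x))]
  have h3 : (1 - γ * x) ^ (2*t) ≤ Real.exp (-(γ*x)) ^ (2*t) :=
    pow_le_pow_left₀ h1 h2 _
  have h4 : x * (1 - γ*x)^(2*t) ≤ x * Real.exp (-(γ*x))^(2*t) :=
    mul_le_mul_of_nonneg_left h3 hx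
  rw [← Real.exp_nat_mul] at h4
  set y : ℝ := (2 * t : ℕ) * -(γ * x) with hy
  have hyval : y = -(2 * t * (γ * x)) := by push_cast [hy]; ring
  have key : -y * Real.exp y ≤ Real.exp (-1) := by
    have h5 := Real.add_one_le_exp (-y - 1)
    have h6 : Real.exp (-y - 1) = Real.exp (-y) * Real.exp (-1) := by
      rw [← Real.exp_add]; ring_nf
    have h7 : -y ≤ Real.exp (-y) * Real.exp (-1) := by
      rw [← h6]; linarith
    have h8 : Real.exp y * Real.exp (-y) = 1 := by
      rw [← Real.exp_add]; simp
    have h9 : 0 ≤ Real.exp y := (Real.exp_pos y).le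
    calc -y * Real.exp y = Real.exp y * (-y) := mul_comm _ _
      _ ≤ Real.exp y * (Real.exp (-y) * Real.exp (-1)) := mul_le_mul_of_nonneg_left h7 h9
      _ = Real.exp (-1) := by rw [← mul_assoc, h8, one_mul]
  have hexp1 : Real.exp (-1) = 1 / Real.exp 1 := by
    rw [Real.exp_neg]; rw [inv_eq_one_div]
  have hden : (0:ℝ) < 2 * Real.exp 1 * γ * t := by positivity
  have hE : (0:ℝ) < Real.exp 1 := Real.exp_pos 1
  have hey : 0 ≤ Real.exp y := (Real.exp_pos y).le
  -- from key : 2*t*(γ*x) * exp y ≤ 1 / e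
  have key2 : 2 * (t:ℝ) * (γ * x) * Real.exp y ≤ 1 / Real.exp 1 := by
    rw [← hexp1]
    calc 2 * (t:ℝ) * (γ * x) * Real.exp y = -y * Real.exp y := by rw [hyval]; ring
    _ ≤ Real.exp (-1) := key
  have goal2 : x * Real.exp y ≤ 1 / (2 * Real.exp 1 * γ * t) := by
    rw [le_div_iff₀ hden]
    have : (1 / Real.exp 1) * Real.exp 1 = 1 := by
      field_simp
    nlinarith [mul_le_mul_of_nonneg_left key2 hE.le]
  linarith [h4, goal2]

private lemma unitary_conj_pow {n : ℕ} (V D : Matrix (Fin n) (Fin n) ℝ)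
    (h1 : V * Vᴴ = 1) (h2 : Vᴴ * V = 1) (t : ℕ) :
    (V * D * Vᴴ) ^ t = V * D ^ t * Vᴴ := by
  induction t with
  | zero => rw [pow_zero, pow_zero, Matrix.mul_one, h1]
  | succ k ih =>
      rw [pow_succ, pow_succ, ih]
      calc V * D ^ k * Vᴴ * (V * D * Vᴴ) = V * D ^ k * (Vᴴ * V) * D * Vᴴ := by
            simp only [Matrix.mul_assoc]
        _ = V * (D ^ k * D) * Vᴴ := by rw [h2]; simp only [Matrix.mul_assoc, Matrix.mul_one]
        _ = _ := by simp only [Matrix.mul_assoc]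

/-- Quadratic-form spectral bound: for a symmetric PSD matrix `K` with `I - γK` PSD
and `t ≥ 1`, one has `vᵀ(I-γK)^t K (I-γK)^t v ≤ ‖v‖²/(2eγt)`. -/
theorem quadratic_form_spectral_bound {n : ℕ}
    (K : Matrix (Fin n) (Fin n) ℝ) (hK : K.PosSemidef)
    (γ : ℝ) (hγ : 0 < γ) (hI : (1 - γ • K).PosSemidef) (t : ℕ) (ht : 1 ≤ t) :
    ∀ v : Fin n → ℝ,
      v ⬝ᵥ (((1 - γ • K) ^ t * K * (1 - γ • K) ^ t).mulVec v)
        ≤ (v ⬝ᵥ v) / (2 * Real.exp 1 * γ * t) := by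
  intro v
  classical
  have h := hK.1
  set V : Matrix (Fin n) (Fin n) ℝ := (h.eigenvectorUnitary : Matrix (Fin n) (Fin n) ℝ)
    with hVdef
  set d : Fin n → ℝ := h.eigenvalues with hddef
  have hVV : V * Vᴴ = 1 := by
    rw [← Matrix.star_eq_conjTranspose]
    exact (Matrix.mem_unitaryGroup_iff).mp h.eigenvectorUnitary.2
  have hVV' : Vᴴ * V = 1 := by
    rw [← Matrix.star_eq_conjTranspose]
    exact (Matrix.mem_unitaryGroup_iff').mp h.eigenvectorUnitary.2
  have hKspec : K = V * diagonal d * Vᴴ := by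
    have h0 := h.spectral_theorem
    rwa [Unitary.conjStarAlgAut_apply, RCLike.ofReal_real_eq_id, Function.id_comp, Matrix.star_eq_conjTranspose] at h0
  have hd0 : ∀ i, 0 ≤ d i := fun i => hK.eigenvalues_nonneg i
  have hd1 : ∀ i, γ * d i ≤ 1 := by
    intro i
    set u : Fin n → ℝ := ⇑(h.eigenvectorBasis i) with hu
    have hKu : K *ᵥ u = d i • u := h.mulVec_eigenvectorBasis i
    have huu : u ⬝ᵥ u = 1 := by
      have hnorm : ‖h.eigenvectorBasis i‖ = 1 := h.eigenvectorBasis.orthonormal.1 i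
      have hinner : (inner ℝ (h.eigenvectorBasis i) (h.eigenvectorBasis i) : ℝ) = 1 := by
        rw [real_inner_self_eq_norm_sq, hnorm]; norm_num
      rw [← hinner]
      simp only [PiLp.inner_apply, RCLike.inner_apply, conj_trivial]
      rfl
    have h2 := hI.dotProduct_mulVec_nonneg u
    have hmv : (1 - γ • K) *ᵥ u = u - (γ * d i) • u := by
      rw [Matrix.sub_mulVec, Matrix.one_mulVec, Matrix.smul_mulVec, hKu,
        smul_smul]
    rw [hmv] at h2
    have h3 : (0:ℝ) ≤ u ⬝ᵥ (u - (γ * d i) • u) := by simpa using h2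
    rw [dotProduct_sub, dotProduct_smul, huu] at h3
    have h4 : (0:ℝ) ≤ 1 - γ * d i := by simpa using h3
    linarith
  -- conjugated matrices
  have h1d : (1 : Matrix (Fin n) (Fin n) ℝ) - γ • diagonal d
      = diagonal (fun i => 1 - γ * d i) := by
    rw [← Matrix.diagonal_one, ← Matrix.diagonal_smul, ← Matrix.diagonal_sub]
    congr 1
  have hB : (1 : Matrix (Fin n) (Fin n) ℝ) - γ • K
      = V * diagonal (fun i => 1 - γ * d i) * Vᴴ := by
    rw [← h1d, hKspec, Matrix.mul_sub, Matrix.sub_mul, Matrix.mul_one, hVV,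
      Matrix.mul_smul, Matrix.smul_mul]
  set c : ℝ := 1 / (2 * Real.exp 1 * γ * t) with hc
  set f : Fin n → ℝ := fun i => d i * (1 - γ * d i) ^ (2 * t) with hf
  have hdiagf : diagonal ((fun i => 1 - γ * d i) ^ t) * diagonal d
      * diagonal ((fun i => 1 - γ * d i) ^ t) = diagonal f := by
    rw [Matrix.diagonal_mul_diagonal, Matrix.diagonal_mul_diagonal]
    refine congrArg diagonal (funext fun i => ?_)
    show (1 - γ * d i) ^ t * d i * (1 - γ * d i) ^ t = d i * (1 - γ * d i) ^ (2 * t)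
    rw [two_mul, pow_add]
    ring
  have hM : (1 - γ • K) ^ t * K * (1 - γ • K) ^ t = V * diagonal f * Vᴴ := by
    rw [hB, unitary_conj_pow V _ hVV hVV', hKspec, Matrix.diagonal_pow, ← hdiagf]
    calc V * diagonal ((fun i => 1 - γ * d i) ^ t) * Vᴴ * (V * diagonal d * Vᴴ)
          * (V * diagonal ((fun i => 1 - γ * d i) ^ t) * Vᴴ)
        = V * diagonal ((fun i => 1 - γ * d i) ^ t) * (Vᴴ * V) * diagonal d * (Vᴴ * V)
          * diagonal ((fun i => 1 - γ * d i) ^ t) * Vᴴ := by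
          simp only [Matrix.mul_assoc]
      _ = V * (diagonal ((fun i => 1 - γ * d i) ^ t) * diagonal d
          * diagonal ((fun i => 1 - γ * d i) ^ t)) * Vᴴ := by
          rw [hVV']
          simp only [Matrix.mul_one, Matrix.mul_assoc]
  have hfc : ∀ i, f i ≤ c := fun i =>
    scalar_spectral_bound γ (d i) hγ (hd0 i) (hd1 i) t ht
  have hcI : c • (1 : Matrix (Fin n) (Fin n) ℝ) = V * diagonal (fun _ => c) * Vᴴ := by
    rw [Matrix.smul_one_eq_diagonal]
    have : diagonal (fun _ : Fin n => c) * Vᴴ = Vᴴ * diagonal (fun _ : Fin n => c) := by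
      rw [← Matrix.smul_one_eq_diagonal, Matrix.smul_mul, Matrix.mul_smul,
        Matrix.one_mul, Matrix.mul_one]
    rw [Matrix.mul_assoc, this, ← Matrix.mul_assoc, hVV, Matrix.one_mul]
  have hpsd : (c • (1 : Matrix (Fin n) (Fin n) ℝ)
      - (1 - γ • K) ^ t * K * (1 - γ • K) ^ t).PosSemidef := by
    rw [hM, hcI, ← Matrix.sub_mul, ← Matrix.mul_sub, Matrix.diagonal_sub]
    exact (Matrix.posSemidef_diagonal_iff.mpr fun i =>
      sub_nonneg.mpr (hfc i)).mul_mul_conjTranspose_same V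
  have h2 := hpsd.dotProduct_mulVec_nonneg v
  have hstar : star v = v := by funext i; simp
  rw [hstar, Matrix.sub_mulVec, dotProduct_sub, Matrix.smul_mulVec,
    Matrix.one_mulVec, dotProduct_smul] at h2
  have hfin : v ⬝ᵥ ((1 - γ • K) ^ t * K * (1 - γ • K) ^ t) *ᵥ v ≤ c * (v ⬝ᵥ v) := by
    simp only [smul_eq_mul] at h2
    linarith
  calc v ⬝ᵥ ((1 - γ • K) ^ t * K * (1 - γ • K) ^ t) *ᵥ v
      ≤ c * (v ⬝ᵥ v) := hfin
    _ = (v ⬝ᵥ v) / (2 * Real.exp 1 * γ * t) := by rw [hc]; ring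
end

section
/- Let Φ ∈ ℝ^{n×M} be a real matrix with K := ΦΦᵀ invertible, y ∈ ℝⁿ, η > 0 with I − ηK positive semidefinite, and t ≥ 1 a natural number. Let v₀ = 0 ∈ ℝ^M, v_{s+1} = v_s − η Φᵀ(Φ v_s − y) be the gradient descent iterates and ŵ = Φᵀ K⁻¹ y the minimum-norm interpolating solution. Then ‖v_t − ŵ‖² ≤ (1/(2·e·η·t)) · ‖K⁻¹ y‖², where e is Euler's number. In particular, for any feature vector z ∈ ℝ^M, the squared prediction gap satisfies |⟨z, v_t⟩ − ⟨z, ŵ⟩|² ≤ ‖z‖² · (1/(2·e·η·t)) · ‖K⁻¹ y‖². -/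
open Matrix

private lemma aux_u_exp (u : ℝ) : u * Real.exp (-u) ≤ (Real.exp 1)⁻¹ := by
  have h : u ≤ Real.exp (u - 1) := by
    have := Real.add_one_le_exp (u - 1); linarith
  calc u * Real.exp (-u) ≤ Real.exp (u - 1) * Real.exp (-u) :=
        mul_le_mul_of_nonneg_right h (Real.exp_pos _).le
    _ = Real.exp (-1) := by rw [← Real.exp_add]; ring_nf
    _ = (Real.exp 1)⁻¹ := by rw [← Real.exp_neg]

private lemma aux_scalar (η lam : ℝ) (hη : 0 < η) (hl : 0 ≤ lam)
    (h1 : 0 ≤ 1 - η * lam) (t : ℕ) (ht : 1 ≤ t) :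
    lam * (1 - η * lam) ^ (2 * t) ≤ 1 / (2 * Real.exp 1 * η * t) := by
  have htpos : (0:ℝ) < t := by exact_mod_cast ht
  set x := η * lam with hx
  have hx0 : 0 ≤ x := mul_nonneg hη.le hl
  have hexp : (1 - x) ^ (2 * t) ≤ Real.exp (-(((2 * t : ℕ) : ℝ) * x)) := by
    have h2 : 1 - x ≤ Real.exp (-x) := by have := Real.add_one_le_exp (-x); linarith
    calc (1 - x) ^ (2 * t) ≤ (Real.exp (-x)) ^ (2 * t) := pow_le_pow_left₀ h1 h2 _
      _ = Real.exp (-(((2 * t : ℕ) : ℝ) * x)) := by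
          rw [← Real.exp_nat_mul]; ring_nf
  have key : lam * (1 - x) ^ (2 * t) ≤ lam * Real.exp (-(((2 * t : ℕ) : ℝ) * x)) :=
    mul_le_mul_of_nonneg_left hexp hl
  have hrw : lam * Real.exp (-(((2 * t : ℕ) : ℝ) * x))
      = (1 / (η * (2 * t))) * ((((2 * t : ℕ) : ℝ) * x) * Real.exp (-(((2 * t : ℕ) : ℝ) * x))) := by
    push_cast
    field_simp [hx]
    ring
  have hb := aux_u_exp (((2 * t : ℕ) : ℝ) * x)
  have h2t : (0:ℝ) < 1 / (η * (2 * t)) := by positivity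
  calc lam * (1 - η * lam) ^ (2 * t) ≤ lam * Real.exp (-(((2 * t : ℕ) : ℝ) * x)) := key
    _ = (1 / (η * (2 * t))) * ((((2 * t : ℕ) : ℝ) * x) * Real.exp (-(((2 * t : ℕ) : ℝ) * x))) := hrw
    _ ≤ (1 / (η * (2 * t))) * (Real.exp 1)⁻¹ := mul_le_mul_of_nonneg_left hb h2t.le
    _ = 1 / (2 * Real.exp 1 * η * t) := by
        rw [inv_eq_one_div, div_mul_div_comm, one_mul]
        congr 1
        ring

private lemma myConj_mul {n : ℕ} (U : Matrix (Fin n) (Fin n) ℝ)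
    (hU1 : star U * U = 1) (d e : Fin n → ℝ) :
    (U * diagonal d * star U) * (U * diagonal e * star U)
      = U * diagonal (fun i => d i * e i) * star U := by
  rw [← diagonal_mul_diagonal]
  calc (U * diagonal d * star U) * (U * diagonal e * star U)
      = U * (diagonal d * ((star U * U) * (diagonal e * star U))) := by
        simp only [Matrix.mul_assoc]
    _ = U * (diagonal d * diagonal e) * star U := by
        rw [hU1, one_mul]; simp only [Matrix.mul_assoc]

private lemma myConj_one {n : ℕ} (U : Matrix (Fin n) (Fin n) ℝ)
    (hU2 : U * star U = 1) :
    U * diagonal (fun _ => (1:ℝ)) * star U = 1 := by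
  rw [diagonal_one, mul_one, hU2]

private lemma myConj_pow {n : ℕ} (U : Matrix (Fin n) (Fin n) ℝ)
    (hU1 : star U * U = 1) (hU2 : U * star U = 1) (d : Fin n → ℝ) (s : ℕ) :
    (U * diagonal d * star U) ^ s = U * diagonal (fun i => d i ^ s) * star U := by
  induction s with
  | zero => simp only [pow_zero]; exact (myConj_one U hU2).symm
  | succ k ih =>
      rw [pow_succ, ih, myConj_mul U hU1]
      have h : (fun i => d i ^ k * d i) = fun i => d i ^ (k+1) := by
        funext i; rw [← pow_succ]
      rw [h]

private lemma myConj_sub {n : ℕ} (U : Matrix (Fin n) (Fin n) ℝ) (d e : Fin n → ℝ) :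
    (U * diagonal d * star U) - (U * diagonal e * star U)
      = U * diagonal (fun i => d i - e i) * star U := by
  rw [← diagonal_sub, Matrix.mul_sub, Matrix.sub_mul]

private lemma myConj_smul {n : ℕ} (U : Matrix (Fin n) (Fin n) ℝ) (a : ℝ) (d : Fin n → ℝ) :
    a • (U * diagonal d * star U) = U * diagonal (fun i => a * d i) * star U := by
  rw [show (fun i => a * d i) = a • d from rfl, diagonal_smul, Matrix.mul_smul, Matrix.smul_mul]

/-- Gradient descent approximation of the minimum-norm interpolating solution:
`‖v_t - ŵ‖² ≤ (1/(2eηt))‖K⁻¹y‖²` and for any feature vector `z`,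
`|⟨z, v_t⟩ - ⟨z, ŵ⟩|² ≤ ‖z‖² (1/(2eηt)) ‖K⁻¹y‖²`, where `K = ΦΦᵀ`. -/
theorem gd_approximates_min_norm_solution {n M : ℕ}
    (Φ : Matrix (Fin n) (Fin M) ℝ)
    (hK : IsUnit (Φ * Φ.transpose).det) (y : Fin n → ℝ)
    (η : ℝ) (hη : 0 < η) (hpsd : (1 - η • (Φ * Φ.transpose)).PosSemidef)
    (t : ℕ) (ht : 1 ≤ t)
    (v : ℕ → (Fin M → ℝ)) (hv0 : v 0 = 0)
    (hstep : ∀ s : ℕ, v (s + 1) = v s - η • (Φ.transpose.mulVec (Φ.mulVec (v s) - y)))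
    (w : Fin M → ℝ) (hw : w = Φ.transpose.mulVec ((Φ * Φ.transpose)⁻¹.mulVec y)) :
    ((v t - w) ⬝ᵥ (v t - w)
        ≤ (1 / (2 * Real.exp 1 * η * t))
          * (((Φ * Φ.transpose)⁻¹.mulVec y) ⬝ᵥ ((Φ * Φ.transpose)⁻¹.mulVec y)))
    ∧ ∀ z : Fin M → ℝ,
        |z ⬝ᵥ v t - z ⬝ᵥ w| ^ 2
          ≤ (z ⬝ᵥ z) * ((1 / (2 * Real.exp 1 * η * t))
            * (((Φ * Φ.transpose)⁻¹.mulVec y) ⬝ᵥ ((Φ * Φ.transpose)⁻¹.mulVec y))) := by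
  classical
  have hct : Φ.conjTranspose = Φ.transpose := conjTranspose_eq_transpose_of_trivial Φ
  have hHerm : (Φ * Φ.transpose).IsHermitian := by
    rw [← hct]; exact isHermitian_mul_conjTranspose_self Φ
  have hKpsd : (Φ * Φ.transpose).PosSemidef := by
    rw [← hct]; exact posSemidef_self_mul_conjTranspose Φ
  set lam := hHerm.eigenvalues with hlamdef
  set U : Matrix (Fin n) (Fin n) ℝ :=
    (Matrix.IsHermitian.eigenvectorUnitary hHerm : Matrix (Fin n) (Fin n) ℝ) with hUdef
  have hU1 : star U * U = 1 := Unitary.coe_star_mul_self _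
  have hU2 : U * star U = 1 := Unitary.coe_mul_star_self _
  have hKspec : Φ * Φ.transpose = U * diagonal (fun i => lam i) * star U := by
    have h := hHerm.spectral_theorem
    rw [h]
    congr 1
  have hlam0 : ∀ i, 0 ≤ lam i := fun i => hKpsd.eigenvalues_nonneg i
  -- A := 1 - η • K diagonalized
  have hA_diag : (1 : Matrix (Fin n) (Fin n) ℝ) - η • (Φ * Φ.transpose)
      = U * diagonal (fun i => 1 - η * lam i) * star U := by
    rw [hKspec, ← myConj_one U hU2, myConj_smul U, myConj_sub U]
  have h1mη : ∀ i, 0 ≤ 1 - η * lam i := by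
    have hpsd' := hpsd.conjTranspose_mul_mul_same U
    rw [hA_diag, ← star_eq_conjTranspose] at hpsd'
    have heq : star U * (U * diagonal (fun i => 1 - η * lam i) * star U) * U
        = diagonal (fun i => 1 - η * lam i) := by
      calc star U * (U * diagonal (fun i => 1 - η * lam i) * star U) * U
          = (star U * U) * diagonal (fun i => 1 - η * lam i) * (star U * U) := by
            simp only [Matrix.mul_assoc]
        _ = diagonal (fun i => 1 - η * lam i) := by rw [hU1, one_mul, mul_one]
    rw [heq] at hpsd'
    exact posSemidef_diagonal_iff.mp hpsd'
  set β : ℝ := 1 / (2 * Real.exp 1 * η * t) with hβ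
  set g : Fin n → ℝ := fun i => lam i * (1 - η * lam i) ^ (2 * t) with hg
  -- the key PSD matrix
  have hP_diag : ((1 : Matrix (Fin n) (Fin n) ℝ) - η • (Φ * Φ.transpose)) ^ t
        * (Φ * Φ.transpose) * (((1 : Matrix (Fin n) (Fin n) ℝ) - η • (Φ * Φ.transpose)) ^ t)
      = U * diagonal g * star U := by
    rw [hA_diag, hKspec, myConj_pow U hU1 hU2, myConj_mul U hU1, myConj_mul U hU1]
    congr 2
    funext i
    simp only [hg]
    ring_nf
  have hMpsd : (β • (1 : Matrix (Fin n) (Fin n) ℝ)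
      - ((1 : Matrix (Fin n) (Fin n) ℝ) - η • (Φ * Φ.transpose)) ^ t
        * (Φ * Φ.transpose) * (((1 : Matrix (Fin n) (Fin n) ℝ) - η • (Φ * Φ.transpose)) ^ t)).PosSemidef := by
    have h1 : β • (1 : Matrix (Fin n) (Fin n) ℝ)
        = U * diagonal (fun _ => β) * star U := by
      rw [← myConj_one U hU2, myConj_smul U]
      congr 2
      funext i; simp
    rw [hP_diag, h1, myConj_sub U]
    have hdpsd : (diagonal (fun i => β - g i)).PosSemidef := by
      refine posSemidef_diagonal_iff.mpr fun i => ?_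
      have := aux_scalar η (lam i) hη (hlam0 i) (h1mη i) t ht
      simp only [hg, hβ]
      linarith
    have := hdpsd.mul_mul_conjTranspose_same U
    rwa [← star_eq_conjTranspose] at this
  -- trajectory
  set c : Fin n → ℝ := (Φ * Φ.transpose)⁻¹ *ᵥ y with hc
  have hΦw : Φ *ᵥ w = y := by
    rw [hw, hc, mulVec_mulVec, mulVec_mulVec, Matrix.mul_nonsing_inv _ hK, one_mulVec]
  set B : Matrix (Fin M) (Fin M) ℝ := 1 - η • (Φ.transpose * Φ) with hB
  have hBmulVec : ∀ x : Fin M → ℝ,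
      B *ᵥ x = x - η • (Φ.transpose *ᵥ (Φ *ᵥ x)) := by
    intro x
    rw [hB, sub_mulVec, one_mulVec, smul_mulVec, ← mulVec_mulVec]
  have htraj : ∀ s, v s - w = -(B ^ s *ᵥ w) := by
    intro s
    induction s with
    | zero => rw [hv0, pow_zero, one_mulVec, zero_sub]
    | succ k ih =>
        have h1 : Φ *ᵥ v k - y = Φ *ᵥ (v k - w) := by rw [mulVec_sub, hΦw]
        calc v (k+1) - w
            = (v k - w) - η • (Φ.transpose *ᵥ (Φ *ᵥ (v k - w))) := by
              rw [hstep k, sub_right_comm, h1]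
          _ = B *ᵥ (v k - w) := (hBmulVec _).symm
          _ = B *ᵥ (-(B ^ k *ᵥ w)) := by rw [ih]
          _ = -(B ^ (k+1) *ᵥ w) := by
              rw [mulVec_neg, mulVec_mulVec, ← pow_succ']
  have hone : B * Φ.transpose = Φ.transpose * (1 - η • (Φ * Φ.transpose)) := by
    rw [hB, Matrix.sub_mul, Matrix.mul_sub, Matrix.one_mul, Matrix.mul_one,
      Matrix.smul_mul, Matrix.mul_smul, Matrix.mul_assoc]
  have hcomm : ∀ s, B ^ s * Φ.transpose
      = Φ.transpose * ((1 - η • (Φ * Φ.transpose)) ^ s) := by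
    intro s
    induction s with
    | zero => rw [pow_zero, pow_zero, Matrix.one_mul, Matrix.mul_one]
    | succ k ih =>
        rw [pow_succ, pow_succ, Matrix.mul_assoc, hone, ← Matrix.mul_assoc, ih,
          Matrix.mul_assoc]
  set A : Matrix (Fin n) (Fin n) ℝ := 1 - η • (Φ * Φ.transpose) with hA
  set x : Fin n → ℝ := (A ^ t) *ᵥ c with hx
  clear_value lam U β g c B A x
  have hvtw : v t - w = -(Φ.transpose *ᵥ x) := by
    rw [htraj t, hw, mulVec_mulVec, hcomm t, ← mulVec_mulVec, ← hx]
  have hsymA : (A ^ t).transpose = A ^ t := by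
    have h := (hpsd.1.pow t)
    rwa [IsHermitian, conjTranspose_eq_transpose_of_trivial] at h
  have hdot1 : (v t - w) ⬝ᵥ (v t - w)
      = c ⬝ᵥ ((A ^ t * (Φ * Φ.transpose) * A ^ t) *ᵥ c) := by
    have e1 : (Φ.transpose *ᵥ x) ⬝ᵥ (Φ.transpose *ᵥ x) = ((Φ * Φ.transpose) *ᵥ x) ⬝ᵥ x := by
      rw [dotProduct_mulVec (Φ.transpose *ᵥ x) Φ.transpose x, vecMul_transpose, mulVec_mulVec]
    have h3 : (A ^ t * (Φ * Φ.transpose) * A ^ t) *ᵥ c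
        = A ^ t *ᵥ ((Φ * Φ.transpose) *ᵥ x) := by
      rw [hx, mulVec_mulVec, mulVec_mulVec]
    have e2 : c ⬝ᵥ ((A ^ t * (Φ * Φ.transpose) * A ^ t) *ᵥ c)
        = x ⬝ᵥ ((Φ * Φ.transpose) *ᵥ x) := by
      rw [h3, dotProduct_mulVec c (A ^ t) _, ← hsymA, vecMul_transpose, ← hx]
    rw [hvtw, neg_dotProduct, dotProduct_neg, neg_neg, e1, e2, dotProduct_comm]
  have hq := hMpsd.dotProduct_mulVec_nonneg c
  rw [star_trivial, sub_mulVec, smul_mulVec, one_mulVec, dotProduct_sub,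
    dotProduct_smul] at hq
  have part1 : (v t - w) ⬝ᵥ (v t - w) ≤ β * (c ⬝ᵥ c) := by
    rw [hdot1]
    have : β • (c ⬝ᵥ c) = β * (c ⬝ᵥ c) := rfl
    linarith [hq]
  refine ⟨part1, ?_⟩
  intro z
  have hz : z ⬝ᵥ v t - z ⬝ᵥ w = z ⬝ᵥ (v t - w) := (dotProduct_sub z _ _).symm
  have hzz : (0:ℝ) ≤ z ⬝ᵥ z := Finset.sum_nonneg fun i _ => mul_self_nonneg _
  have hcs : (z ⬝ᵥ (v t - w)) ^ 2 ≤ (z ⬝ᵥ z) * ((v t - w) ⬝ᵥ (v t - w)) := by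
    have h := Finset.sum_mul_sq_le_sq_mul_sq Finset.univ z (v t - w)
    have e1 : z ⬝ᵥ (v t - w) = ∑ i, z i * (v t - w) i := rfl
    have e2 : z ⬝ᵥ z = ∑ i, z i ^ 2 := by
      simp [dotProduct, pow_two]
    have e3 : (v t - w) ⬝ᵥ (v t - w) = ∑ i, (v t - w) i ^ 2 := by
      simp [dotProduct, pow_two]
    rw [e1, e2, e3]
    exact h
  calc |z ⬝ᵥ v t - z ⬝ᵥ w| ^ 2 = (z ⬝ᵥ (v t - w)) ^ 2 := by rw [hz, sq_abs]
    _ ≤ (z ⬝ᵥ z) * ((v t - w) ⬝ᵥ (v t - w)) := hcs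
    _ ≤ (z ⬝ᵥ z) * (β * (c ⬝ᵥ c)) := mul_le_mul_of_nonneg_left part1 hzz
end

section
/- Let n ≥ 1 and let K be an n×n real symmetric positive definite matrix. For λ ≥ 0 define the empirical effective dimension N(λ) = Tr[K (K + λ n I)⁻¹]. Then for every real c with 0 < c < n there exists a unique λ > 0 such that N(λ) = c. -/
open Matrix

/-- The empirical effective dimension `N(λ) = Tr[K(K + λnI)⁻¹]`. -/
noncomputable def effDim {n : ℕ} (K : Matrix (Fin n) (Fin n) ℝ) (l : ℝ) : ℝ :=
  (K * (K + (l * n) • (1 : Matrix (Fin n) (Fin n) ℝ))⁻¹).trace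

lemma effDim_eq {n : ℕ} (K : Matrix (Fin n) (Fin n) ℝ) (hK : K.PosDef) (l : ℝ) (hl : 0 < l) :
    effDim K l = ∑ i, hK.1.eigenvalues i / (hK.1.eigenvalues i + l * n) := by
  classical
  set hA := hK.1
  set U : Matrix (Fin n) (Fin n) ℝ := (hA.eigenvectorUnitary : Matrix (Fin n) (Fin n) ℝ) with hU
  set μ := hA.eigenvalues with hμ
  have hUU : star U * U = 1 := Unitary.coe_star_mul_self hA.eigenvectorUnitary
  have hUU' : U * star U = 1 := Unitary.coe_mul_star_self hA.eigenvectorUnitary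
  have hspec : K = U * diagonal μ * star U := by
    have := hA.spectral_theorem
    simpa using this
  have hpos : ∀ i, 0 < μ i + l * n := by
    intro i
    have h1 : 0 < μ i := hK.eigenvalues_pos i
    have h2 : (0:ℝ) ≤ l * n := by positivity
    linarith
  set d : Fin n → ℝ := fun i => μ i + l * n with hd
  have hsum : K + (l * n) • (1 : Matrix (Fin n) (Fin n) ℝ) = U * diagonal d * star U := by
    have h1 : (l * n) • (1 : Matrix (Fin n) (Fin n) ℝ)
        = U * ((l * n) • (1 : Matrix (Fin n) (Fin n) ℝ)) * star U := by
      rw [Matrix.mul_smul, Matrix.smul_mul, mul_one, hUU']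
    rw [hspec]
    nth_rewrite 1 [h1]
    rw [← Matrix.add_mul, ← Matrix.mul_add]
    congr 2
    rw [Matrix.smul_one_eq_diagonal, diagonal_add]
  have hinv : (U * diagonal d * star U)⁻¹ = U * diagonal (fun i => (d i)⁻¹) * star U := by
    apply inv_eq_right_inv
    calc U * diagonal d * star U * (U * diagonal (fun i => (d i)⁻¹) * star U)
        = U * diagonal d * (star U * U) * diagonal (fun i => (d i)⁻¹) * star U := by
          ring_nf
          noncomm_ring
      _ = 1 := by
          rw [hUU, mul_one, mul_assoc U, diagonal_mul_diagonal]
          have : (fun i => d i * (d i)⁻¹) = fun _ => (1:ℝ) := by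
            funext i; exact mul_inv_cancel₀ (hpos i).ne'
          rw [this, diagonal_one, mul_one, hUU']
  rw [effDim, hsum, hinv, hspec]
  have : U * diagonal μ * star U * (U * diagonal (fun i => (d i)⁻¹) * star U)
      = U * (diagonal μ * diagonal (fun i => (d i)⁻¹)) * star U := by
    simp only [mul_assoc]
    rw [← mul_assoc (star U) U, hUU, one_mul]
  rw [this, trace_mul_cycle, ← mul_assoc, hUU, one_mul, diagonal_mul_diagonal, trace_diagonal]
  simp [div_eq_mul_inv, hd]

/-- For every level `0 < c < n` there is a unique `λ > 0` with `N(λ) = c`. -/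
theorem effDim_exists_unique {n : ℕ} (hn : 1 ≤ n)
    (K : Matrix (Fin n) (Fin n) ℝ) (hK : K.PosDef)
    (c : ℝ) (hc0 : 0 < c) (hcn : c < n) :
    ∃! l : ℝ, 0 < l ∧ effDim K l = c := by
  classical
  haveI : Nonempty (Fin n) := Fin.pos_iff_nonempty.mp hn
  set μ := hK.1.eigenvalues with hμ
  have hμpos : ∀ i, 0 < μ i := fun i => hK.eigenvalues_pos i
  have hnpos : (0:ℝ) < n := by exact_mod_cast hn
  set g : ℝ → ℝ := fun l => ∑ i, μ i / (μ i + l * n) with hg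
  have hge : ∀ l, 0 < l → effDim K l = g l := fun l hl => effDim_eq K hK l hl
  have hden : ∀ l, 0 ≤ l → ∀ i : Fin n, 0 < μ i + l * n := by
    intro l hl i
    have : (0:ℝ) ≤ l * n := by positivity
    linarith [hμpos i]
  have hanti : StrictAntiOn g (Set.Ici 0) := by
    intro a ha b hb hab
    apply Finset.sum_lt_sum_of_nonempty
    · exact Finset.univ_nonempty
    · intro i _
      apply div_lt_div_of_pos_left (hμpos i) (hden a ha i)
      have : a * n < b * n := by
        exact mul_lt_mul_of_pos_right hab hnpos
      linarith
  have hg0 : g 0 = n := by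
    simp only [hg, zero_mul, add_zero]
    rw [Finset.sum_congr rfl fun i _ => div_self (hμpos i).ne']
    simp
  -- choose b with g b < c
  set b : ℝ := (∑ i, μ i) / (c * n) + 1 with hb
  have hsumnn : 0 ≤ ∑ i, μ i := Finset.sum_nonneg fun i _ => (hμpos i).le
  have hbpos : 0 < b := by
    have h : 0 ≤ (∑ i, μ i) / (c * (n:ℝ)) := div_nonneg hsumnn (by positivity)
    rw [hb]
    linarith
  have hgb : g b < c := by
    have h1 : ∀ i : Fin n, μ i / (μ i + b * n) ≤ μ i / (b * n) := by
      intro i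
      apply div_le_div_of_nonneg_left (hμpos i).le (by positivity)
      linarith [hμpos i]
    have h2 : g b ≤ (∑ i, μ i) / (b * n) := by
      rw [Finset.sum_div]
      exact Finset.sum_le_sum fun i _ => h1 i
    have h3 : (∑ i, μ i) / (b * n) < c := by
      rw [div_lt_iff₀ (by positivity)]
      have h4 : (∑ i, μ i) / (c * n) * (c * n) = ∑ i, μ i := by
        field_simp
      have h5 : (∑ i, μ i) / (c * n) < b := by
        rw [hb]; linarith
      calc ∑ i, μ i = (∑ i, μ i) / (c * n) * (c * n) := h4.symm
        _ < b * (c * n) := by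
            apply mul_lt_mul_of_pos_right h5 (by positivity)
        _ = c * (b * n) := by ring
    linarith
  have hcont : ContinuousOn g (Set.Icc 0 b) := by
    apply continuousOn_finset_sum
    intro i _
    apply ContinuousOn.div continuousOn_const
    · fun_prop
    · intro x hx
      exact (hden x hx.1 i).ne'
  have hmem : c ∈ Set.Icc (g b) (g 0) := ⟨hgb.le, by rw [hg0]; exact hcn.le⟩
  obtain ⟨l, hl, hgl⟩ := intermediate_value_Icc' hbpos.le hcont hmem
  have hlpos : 0 < l := by
    rcases lt_or_eq_of_le hl.1 with h | h
    · exact h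
    · exfalso; rw [← h] at hgl; rw [hg0] at hgl; linarith [hgl]
  refine ⟨l, ⟨hlpos, by rw [hge l hlpos, hgl]⟩, ?_⟩
  rintro m ⟨hmpos, hme⟩
  rw [hge m hmpos] at hme
  exact hanti.injOn hmpos.le hlpos.le (by rw [hme, hgl])
end

section
/- Let s > 0, d ≥ 1, and x, x′ ∈ ℝ^d. Let ω = (ω₁, …, ω_d) be a random vector whose coordinates are independent, each with Gaussian distribution N(0, s) of mean 0 and variance s, and let b be uniformly distributed on [0, 2π], independent of ω. Then E[ 2·cos(⟨ω, x⟩ + b)·cos(⟨ω, x′⟩ + b) ] = exp(−s‖x − x′‖²/2). -/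
open MeasureTheory ProbabilityTheory Complex
open scoped NNReal ENNReal


lemma gauss_char (v : ℝ) (hv : 0 < v) (c : ℝ) :
    ∫ t : ℝ, Complex.exp (t * c * Complex.I) ∂(gaussianReal 0 v.toNNReal)
      = Real.exp (-(v * c ^ 2) / 2) := by
  have hv' : v.toNNReal ≠ 0 := by simp [Real.toNNReal_eq_zero, hv, not_le]
  rw [gaussianReal_of_var_ne_zero _ hv']
  have hcoe : ((v.toNNReal : ℝ)) = v := Real.coe_toNNReal v hv.le
  have hmeas : Measurable fun x : ℝ => (gaussianPDFReal 0 v.toNNReal x).toNNReal :=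
    (measurable_gaussianPDFReal 0 v.toNNReal).real_toNNReal
  have hpdf : (gaussianPDF 0 v.toNNReal)
      = fun x => ((fun x : ℝ => (gaussianPDFReal 0 v.toNNReal x).toNNReal) x : ℝ≥0∞) := by
    ext x; rfl
  rw [hpdf, integral_withDensity_eq_integral_smul hmeas]
  have h2v : (0:ℝ) < 2 * Real.pi * v := by positivity
  have hint : ∀ x : ℝ, (fun x : ℝ => (gaussianPDFReal 0 v.toNNReal x).toNNReal) x •
      Complex.exp (x * c * Complex.I)
      = ((1 / Real.sqrt (2 * Real.pi * v) : ℝ) : ℂ) *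
        Complex.exp ((-(1/(2*v)) : ℂ) * (x:ℝ) ^ 2 + (c * Complex.I) * x + 0) := by
    intro x
    rw [NNReal.smul_def, Real.coe_toNNReal _ (gaussianPDFReal_nonneg _ _ _)]
    rw [gaussianPDFReal, Complex.real_smul]
    push_cast [hcoe]
    rw [mul_assoc, ← Complex.exp_add, one_div]
    congr 1
    have h2v' : (2*(v:ℂ)) ≠ 0 := by
      have : (v:ℂ) ≠ 0 := by exact_mod_cast hv.ne'
      simp [this]
    field_simp
    ring
  simp_rw [hint]
  rw [integral_const_mul]
  have hbeq : (-(1/(2*(v:ℂ)))) = (((-(1/(2*v)) : ℝ)) : ℂ) := by push_cast; ring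
  have hb : ((((-(1/(2*v)) : ℝ)) : ℂ)).re < 0 := by
    rw [Complex.ofReal_re]
    have : (0:ℝ) < 1/(2*v) := by positivity
    linarith
  simp_rw [hbeq]
  rw [integral_cexp_quadratic hb ((c:ℂ)*Complex.I) 0]
  have hsq : Real.sqrt (2 * Real.pi * v) ≠ 0 := by positivity
  have h1 : (↑Real.pi / -(((-(1/(2*v)) : ℝ)) : ℂ)) = ((2 * Real.pi * v : ℝ) : ℂ) := by
    rw [← Complex.ofReal_neg, ← Complex.ofReal_div]
    norm_num
    field_simp
  have h2 : ((2 * Real.pi * v : ℝ) : ℂ) ^ (1/2 : ℂ) = (Real.sqrt (2 * Real.pi * v) : ℂ) := by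
    have := Complex.ofReal_cpow h2v.le (1/2)
    rw [show ((1/2 : ℝ) : ℂ) = (1/2 : ℂ) by norm_num] at this
    rw [← this, Real.sqrt_eq_rpow]
  have h3 : (0 : ℂ) - ((c:ℂ)*Complex.I)^2 / (4 * (((-(1/(2*v)) : ℝ)) : ℂ)) =
      ((-(v * c ^ 2) / 2 : ℝ) : ℂ) := by
    have hvC : (v:ℂ) ≠ 0 := by exact_mod_cast hv.ne'
    push_cast
    rw [mul_pow, Complex.I_sq]
    field_simp
    ring
  rw [h1, h2, h3, ← Complex.ofReal_exp, ← Complex.ofReal_mul, ← Complex.ofReal_mul]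
  congr 1
  field_simp

lemma pi_char (d : ℕ) (v : ℝ) (hv : 0 < v) (y : Fin d → ℝ) :
    ∫ ω : Fin d → ℝ, Complex.exp ((↑(∑ i, ω i * y i) : ℂ) * Complex.I)
        ∂(Measure.pi fun _ : Fin d => gaussianReal 0 v.toNNReal)
      = Real.exp (-(v * ∑ i, (y i)^2)/2) := by
  have key : ∀ ω : Fin d → ℝ, Complex.exp ((↑(∑ i, ω i * y i) : ℂ) * Complex.I)
      = ∏ i, Complex.exp ((ω i : ℂ) * (y i : ℂ) * Complex.I) := by
    intro ω
    rw [← Complex.exp_sum]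
    congr 1
    push_cast
    rw [Finset.sum_mul]
  simp_rw [key]
  letI : MeasureSpace ℝ := ⟨gaussianReal 0 v.toNNReal⟩
  have hvol : (volume : Measure ℝ) = gaussianReal 0 v.toNNReal := rfl
  have hpi : Measure.pi (fun _ : Fin d => gaussianReal 0 v.toNNReal)
      = (volume : Measure (Fin d → ℝ)) := by
    rw [volume_pi]
    rfl
  haveI : SigmaFinite (volume : Measure ℝ) := by rw [hvol]; infer_instance
  rw [hpi, volume_pi, MeasureTheory.integral_fintype_prod_eq_prod (ι := Fin d) (E := fun _ : Fin d => ℝ)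
    (fun i (t : ℝ) => Complex.exp ((t : ℂ) * (y i : ℂ) * Complex.I))]
  simp_rw [hvol, gauss_char v hv]
  rw [← Complex.ofReal_prod, ← Real.exp_sum]
  congr 2
  rw [Finset.mul_sum, ← Finset.sum_div, ← Finset.sum_neg_distrib]

lemma nu_prob : IsProbabilityMeasure
    ((ENNReal.ofReal (2 * Real.pi))⁻¹ • volume.restrict (Set.Icc 0 (2 * Real.pi))) := by
  constructor
  rw [Measure.smul_apply, Measure.restrict_apply MeasurableSet.univ, Set.univ_inter,
    Real.volume_Icc, sub_zero, smul_eq_mul, ENNReal.inv_mul_cancel]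
  · simp [Real.pi_pos, Real.pi_ne_zero]
  · exact ENNReal.ofReal_ne_top

lemma cos_int_zero (c : ℝ) :
    ∫ b, Real.cos (c + 2*b)
        ∂((ENNReal.ofReal (2 * Real.pi))⁻¹ • volume.restrict (Set.Icc 0 (2 * Real.pi))) = 0 := by
  rw [integral_smul_measure, integral_Icc_eq_integral_Ioc,
    ← intervalIntegral.integral_of_le (by positivity)]
  simp_rw [add_comm c]
  rw [intervalIntegral.integral_comp_mul_add Real.cos two_ne_zero c, integral_cos]
  have h4 : 2*(2*Real.pi)+c = (c + 2*Real.pi) + 2*Real.pi := by ring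
  rw [mul_zero, zero_add, h4, Real.sin_add_two_pi, Real.sin_add_two_pi]
  simp

lemma inner_int (A B : ℝ) :
    ∫ b, 2 * Real.cos (A + b) * Real.cos (B + b)
        ∂((ENNReal.ofReal (2 * Real.pi))⁻¹ • volume.restrict (Set.Icc 0 (2 * Real.pi)))
      = Real.cos (A - B) := by
  haveI := nu_prob
  have prod : ∀ α β : ℝ, 2*Real.cos α*Real.cos β = Real.cos (α-β) + Real.cos (α+β) := by
    intro α β; rw [Real.cos_sub, Real.cos_add]; ring
  have key : ∀ b : ℝ, 2*Real.cos (A+b)*Real.cos (B+b)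
      = Real.cos (A-B) + Real.cos ((A+B)+2*b) := by
    intro b
    rw [prod]
    congr 2 <;> ring
  simp_rw [key]
  have hint2 : Integrable (fun b : ℝ => Real.cos ((A+B)+2*b))
      ((ENNReal.ofReal (2 * Real.pi))⁻¹ • volume.restrict (Set.Icc 0 (2 * Real.pi))) := by
    refine Integrable.mono' (integrable_const 1) ?_ ?_
    · exact (Real.continuous_cos.comp (by continuity)).aestronglyMeasurable
    · exact ae_of_all _ fun b => by
        rw [Real.norm_eq_abs]; exact Real.abs_cos_le_one _
  rw [integral_add (integrable_const _) hint2, integral_const, probReal_univ, cos_int_zero]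
  simp

/-- Unbiasedness of random Fourier features for the Gaussian kernel: with `ω` having
independent `N(0, s)` coordinates and `b` uniform on `[0, 2π]` independent of `ω`,
`E[2 cos(⟨ω,x⟩ + b) cos(⟨ω,x'⟩ + b)] = exp(-s‖x - x'‖²/2)`. -/
theorem random_fourier_features_unbiased (d : ℕ) (hd : 1 ≤ d) (s : ℝ) (hs : 0 < s)
    (x x' : Fin d → ℝ) :
    ∫ p : (Fin d → ℝ) × ℝ,
        2 * Real.cos ((∑ i, p.1 i * x i) + p.2) * Real.cos ((∑ i, p.1 i * x' i) + p.2)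
        ∂((Measure.pi fun _ : Fin d => gaussianReal 0 s.toNNReal).prod
            ((ENNReal.ofReal (2 * Real.pi))⁻¹ • volume.restrict (Set.Icc 0 (2 * Real.pi))))
      = Real.exp (-s * (∑ i, (x i - x' i) ^ 2) / 2) := by
  haveI := nu_prob
  have hInt : Integrable (fun p : (Fin d → ℝ) × ℝ =>
      2 * Real.cos ((∑ i, p.1 i * x i) + p.2) * Real.cos ((∑ i, p.1 i * x' i) + p.2))
      ((Measure.pi fun _ : Fin d => gaussianReal 0 s.toNNReal).prod
        ((ENNReal.ofReal (2 * Real.pi))⁻¹ • volume.restrict (Set.Icc 0 (2 * Real.pi)))) := by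
    have c1 : Continuous fun p : (Fin d → ℝ) × ℝ => (∑ i, p.1 i * x i) + p.2 :=
      (continuous_finset_sum _ fun i _ =>
        ((continuous_apply i).comp continuous_fst).mul continuous_const).add continuous_snd
    have c2 : Continuous fun p : (Fin d → ℝ) × ℝ => (∑ i, p.1 i * x' i) + p.2 :=
      (continuous_finset_sum _ fun i _ =>
        ((continuous_apply i).comp continuous_fst).mul continuous_const).add continuous_snd
    refine Integrable.mono' (integrable_const 2) ?_ ?_
    · exact ((continuous_const.mul (Real.continuous_cos.comp c1)).mul
        (Real.continuous_cos.comp c2)).aestronglyMeasurable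
    · refine ae_of_all _ fun p => ?_
      rw [Real.norm_eq_abs, abs_mul, abs_mul]
      have h1 := Real.abs_cos_le_one ((∑ i, p.1 i * x i) + p.2)
      have h2 := Real.abs_cos_le_one ((∑ i, p.1 i * x' i) + p.2)
      have h3 := abs_nonneg (Real.cos ((∑ i, p.1 i * x i) + p.2))
      have h4 := abs_nonneg (Real.cos ((∑ i, p.1 i * x' i) + p.2))
      have h5 : |(2:ℝ)| = 2 := abs_of_pos two_pos
      rw [h5]
      nlinarith
  rw [MeasureTheory.integral_prod _ hInt]
  simp_rw [inner_int]
  have hsub : ∀ ω : Fin d → ℝ, (∑ i, ω i * x i) - (∑ i, ω i * x' i)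
      = ∑ i, ω i * (x i - x' i) := by
    intro ω
    rw [← Finset.sum_sub_distrib]
    simp_rw [mul_sub]
  simp_rw [hsub, ← Complex.exp_ofReal_mul_I_re]
  have hf : Integrable (fun ω : Fin d → ℝ =>
      Complex.exp ((↑(∑ i, ω i * (x i - x' i)) : ℂ) * Complex.I))
      (Measure.pi fun _ : Fin d => gaussianReal 0 s.toNNReal) := by
    refine Integrable.mono' (integrable_const 1) ?_ ?_
    · refine Continuous.aestronglyMeasurable ?_
      exact Complex.continuous_exp.comp ((Complex.continuous_ofReal.comp
        (continuous_finset_sum _ fun i _ => (continuous_apply i).mul continuous_const)).mul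
        continuous_const)
    · exact ae_of_all _ fun ω => le_of_eq (Complex.norm_exp_ofReal_mul_I _)
  have hre := integral_re hf
  simp only [RCLike.re_to_complex] at hre
  rw [hre, pi_char d s hs, Complex.ofReal_re]
  congr 1
  ring
end
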